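/- For s ≥ 2, the function g(α) = (1+α)^2 / (1 + α + (s/(2(s-1)))α^2) on [0, ∞) attains its global maximum at α = s-1 with value 2s/(s+1). -/
import Mathlib

theorem stmt_13 (s : ℕ) (hs : 2 ≤ s) :
    let g : ℝ → ℝ := fun α => (1 + α) ^ 2 / (1 + α + (s : ℝ) / (2 * ((s : ℝ) - 1)) * α ^ 2)
    (∀ α, 0 ≤ α → g α ≤ g ((s : ℝ) - 1)) ∧ g ((s : ℝ) - 1) = 2 * s / (s + 1) := by
  intro g
  have ht : (2:ℝ) ≤ (s:ℝ) := by exact_mod_cast hs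
  have h1 : (0:ℝ) < (s:ℝ) - 1 := by linarith
  have hval : g ((s : ℝ) - 1) = 2 * s / (s + 1) := by
    show (1 + ((s:ℝ)-1)) ^ 2 / (1 + ((s:ℝ)-1) + (s : ℝ) / (2 * ((s : ℝ) - 1)) * ((s:ℝ)-1) ^ 2)
        = 2 * s / (s + 1)
    have hs1 : (s:ℝ) + 1 ≠ 0 := by linarith
    field_simp
    ring
  refine ⟨fun α hα => ?_, hval⟩
  rw [hval]
  show (1 + α) ^ 2 / (1 + α + (s : ℝ) / (2 * ((s : ℝ) - 1)) * α ^ 2) ≤ 2 * s / (s + 1)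
  have hD : 0 < 1 + α + (s : ℝ) / (2 * ((s : ℝ) - 1)) * α ^ 2 := by
    have : 0 ≤ (s : ℝ) / (2 * ((s : ℝ) - 1)) * α ^ 2 := by
      apply mul_nonneg (div_nonneg (by linarith) (by linarith)) (sq_nonneg _)
    linarith
  rw [div_le_div_iff₀ hD (by linarith)]
  have key : 0 ≤ (((s:ℝ)-1) - α)^2 := sq_nonneg _
  have h2 : (0:ℝ) < 2 * ((s:ℝ) - 1) := by linarith
  refine le_of_mul_le_mul_left ?_ h2
  have hrw : 2*((s:ℝ)-1) * (2*(s:ℝ)*(1+α+(s:ℝ)/(2*((s:ℝ)-1))*α^2))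
      = 4*(s:ℝ)*((s:ℝ)-1)*(1+α) + 2*(s:ℝ)*(s:ℝ)*α^2 := by
    field_simp
    ring
  rw [hrw]
  nlinarith [key, h1, hα, mul_nonneg hα hα]
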